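/- arXiv:1810.07874 — 6 statements merged into one kernel-verified Lean document; each statement's English description precedes it below -/
import Mathlib

section
/- Let A ∈ ℝ^{M×N}, B ∈ ℝ^{N×R}, C ∈ ℝ^{R×R}, D ∈ ℝ^{M×M}, E ∈ ℝ^{M×R}, and X ∈ ℝ^{M×R}. Then X satisfies the matrix equation A (B ∗ ((B ∗ (Aᵀ X)) C)) + D X = E if and only if vec(X) satisfies the linear system H vec(X) = vec(E), where H = I_R ⊗ D + (I_R ⊗ A) · diag(vec(B)) · (Cᵀ ⊗ I_N) · diag(vec(B)) · (I_R ⊗ Aᵀ). -/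
open Matrix
open scoped Matrix Kronecker

/-- Column-stacking (vectorization) of a matrix: `vec P (r, m) = P m r`. -/
def vec {m r : Type*} (P : Matrix m r ℝ) : r × m → ℝ := fun p => P p.2 p.1

private lemma sum_cyc {α β γ : Type*} [Fintype α] [Fintype β] [Fintype γ]
    (f : α → β → γ → ℝ) :
    ∑ a, ∑ b, ∑ c, f a b c = ∑ c, ∑ a, ∑ b, f a b c := by
  calc ∑ a, ∑ b, ∑ c, f a b c = ∑ a, ∑ c, ∑ b, f a b c :=
        Finset.sum_congr rfl fun _ _ => Finset.sum_comm
    _ = ∑ c, ∑ a, ∑ b, f a b c := Finset.sum_comm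

/-- Theorem 1 of the paper: the matrix equation
`A (B ∗ ((B ∗ (Aᵀ X)) C)) + D X = E` is equivalent to the linear system
`H vec(X) = vec(E)` with
`H = I ⊗ D + (I ⊗ A) diag(vec B) (Cᵀ ⊗ I) diag(vec B) (I ⊗ Aᵀ)`. -/
theorem stmt0 {M N R : ℕ}
    (A : Matrix (Fin M) (Fin N) ℝ) (B : Matrix (Fin N) (Fin R) ℝ)
    (C : Matrix (Fin R) (Fin R) ℝ) (D : Matrix (Fin M) (Fin M) ℝ)
    (E : Matrix (Fin M) (Fin R) ℝ) (X : Matrix (Fin M) (Fin R) ℝ) :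
    A * (B ⊙ ((B ⊙ (Aᵀ * X)) * C)) + D * X = E ↔
      ((1 : Matrix (Fin R) (Fin R) ℝ) ⊗ₖ D +
        ((1 : Matrix (Fin R) (Fin R) ℝ) ⊗ₖ A) * Matrix.diagonal (_root_.vec B) *
          (Cᵀ ⊗ₖ (1 : Matrix (Fin N) (Fin N) ℝ)) * Matrix.diagonal (_root_.vec B) *
          ((1 : Matrix (Fin R) (Fin R) ℝ) ⊗ₖ Aᵀ)).mulVec (_root_.vec X) = _root_.vec E := by
  have key : ((1 : Matrix (Fin R) (Fin R) ℝ) ⊗ₖ D +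
        ((1 : Matrix (Fin R) (Fin R) ℝ) ⊗ₖ A) * Matrix.diagonal (_root_.vec B) *
          (Cᵀ ⊗ₖ (1 : Matrix (Fin N) (Fin N) ℝ)) * Matrix.diagonal (_root_.vec B) *
          ((1 : Matrix (Fin R) (Fin R) ℝ) ⊗ₖ Aᵀ)).mulVec (_root_.vec X)
      = _root_.vec (A * (B ⊙ ((B ⊙ (Aᵀ * X)) * C)) + D * X) := by
    funext p
    obtain ⟨r, m⟩ := p
    simp only [Matrix.mulVec, dotProduct, Fintype.sum_prod_type, Matrix.add_apply,
      Matrix.mul_apply, Matrix.kroneckerMap_apply, Matrix.diagonal_apply, _root_.vec,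
      Matrix.hadamard_apply, Matrix.one_apply, Matrix.transpose_apply,
      Fintype.sum_prod_type]
    simp only [Prod.mk.injEq, ite_and, mul_ite, ite_mul, one_mul, zero_mul, mul_zero,
      mul_one, Finset.sum_ite_irrel, Finset.sum_ite_eq, Finset.sum_ite_eq', Finset.sum_const_zero,
      Finset.mem_univ, if_true]
    simp only [add_mul, Finset.sum_add_distrib, ite_mul, zero_mul, Finset.mul_sum,
      Finset.sum_mul]
    rw [add_comm]
    congr 1
    · rw [sum_cyc]
      refine Finset.sum_congr rfl fun x _ => ?_
      rw [Finset.sum_comm]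
      exact Finset.sum_comm.trans
        (Finset.sum_congr rfl fun y _ => Finset.sum_congr rfl fun z _ => by ring)
    · rw [Finset.sum_comm]
      simp
  rw [key]
  constructor
  · intro h; rw [h]
  · intro h; funext m r
    have := congrFun h (r, m)
    simpa [_root_.vec] using this
end

section
/- Let A ∈ ℝ^{N×K} with K ≤ N, and let A = U Λ Vᵀ be a singular value decomposition of A with singular values σ_1, …, σ_K. Then for every B ∈ ℝ^{N×K} with Bᵀ B = I_K one has tr(Aᵀ B) ≤ Σ_{k=1}^{K} σ_k, and equality holds for B = U [I_K; 0] Vᵀ, where [I_K; 0] ∈ ℝ^{N×K} stacks the K×K identity matrix on top of the (N−K)×K zero matrix. -/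
open Matrix
open scoped Matrix

/-- The `N × K` matrix `[I_K; 0]` stacking the identity on top of zeros. -/
def idZero (N K : ℕ) : Matrix (Fin N) (Fin K) ℝ :=
  Matrix.of fun i j => if (i : ℕ) = (j : ℕ) then 1 else 0

/-- Given an SVD `A = U Λ Vᵀ` of `A ∈ ℝ^{N×K}` (`K ≤ N`), for every `B` with
`Bᵀ B = I` one has `tr(Aᵀ B) ≤ Σ_k σ_k`, and equality holds for
`B = U [I_K; 0] Vᵀ`. -/
theorem stmt3 {N K : ℕ} (hKN : K ≤ N)
    (A : Matrix (Fin N) (Fin K) ℝ)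
    (U : Matrix (Fin N) (Fin N) ℝ) (Λ : Matrix (Fin N) (Fin K) ℝ)
    (V : Matrix (Fin K) (Fin K) ℝ)
    (hU : Uᵀ * U = 1) (hV : Vᵀ * V = 1)
    (hΛdiag : ∀ (i : Fin N) (j : Fin K), (i : ℕ) ≠ (j : ℕ) → Λ i j = 0)
    (hΛnonneg : ∀ (i : Fin N) (j : Fin K), 0 ≤ Λ i j)
    (hSVD : A = U * Λ * Vᵀ) :
    (∀ B : Matrix (Fin N) (Fin K) ℝ, Bᵀ * B = 1 →
        Matrix.trace (Aᵀ * B) ≤ ∑ k : Fin K, Λ (Fin.castLE hKN k) k) ∧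
    Matrix.trace (Aᵀ * (U * idZero N K * Vᵀ)) = ∑ k : Fin K, Λ (Fin.castLE hKN k) k := by
  have hUU : U * Uᵀ = 1 := mul_eq_one_comm.mp hU
  have hVV : V * Vᵀ = 1 := mul_eq_one_comm.mp hV
  -- reduce trace to the "rotated" matrix C = Uᵀ B V
  have htr : ∀ B : Matrix (Fin N) (Fin K) ℝ,
      Matrix.trace (Aᵀ * B) = Matrix.trace (Λᵀ * (Uᵀ * B * V)) := by
    intro B
    have hAT : Aᵀ = V * Λᵀ * Uᵀ := by
      rw [hSVD]; simp [Matrix.transpose_mul, Matrix.mul_assoc]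
    rw [hAT]
    rw [show V * Λᵀ * Uᵀ * B = V * (Λᵀ * (Uᵀ * B)) by simp [Matrix.mul_assoc],
      Matrix.trace_mul_comm,
      show Λᵀ * (Uᵀ * B) * V = Λᵀ * (Uᵀ * B * V) by simp [Matrix.mul_assoc]]
  -- diagonal entries of Λᵀ * C
  have hdiag : ∀ (C : Matrix (Fin N) (Fin K) ℝ) (k : Fin K),
      (Λᵀ * C) k k = Λ (Fin.castLE hKN k) k * C (Fin.castLE hKN k) k := by
    intro C k
    rw [Matrix.mul_apply]
    apply Finset.sum_eq_single (Fin.castLE hKN k)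
    · intro i _ hi
      rw [Matrix.transpose_apply, hΛdiag i k (by simpa [Fin.ext_iff] using hi), zero_mul]
    · simp
  constructor
  · intro B hB
    set C : Matrix (Fin N) (Fin K) ℝ := Uᵀ * B * V with hCdef
    have hC : Cᵀ * C = 1 := by
      have : Cᵀ * C = Vᵀ * (Bᵀ * (U * Uᵀ) * B) * V := by
        simp [hCdef, Matrix.transpose_mul, Matrix.mul_assoc]
      rw [this, hUU, Matrix.mul_one, hB, Matrix.mul_one, hV]
    have hCle : ∀ i k, C i k ≤ 1 := by
      intro i k
      have h1 : ∑ j, (C j k) ^ 2 = 1 := by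
        have := congrFun (congrFun hC k) k
        simpa [Matrix.mul_apply, Matrix.one_apply, pow_two] using this
      have h2 : (C i k) ^ 2 ≤ 1 := by
        rw [← h1]
        exact Finset.single_le_sum (f := fun j => (C j k) ^ 2) (fun j _ => sq_nonneg _) (Finset.mem_univ i)
      nlinarith [sq_nonneg (C i k - 1)]
    rw [htr B]
    calc Matrix.trace (Λᵀ * C)
        = ∑ k, Λ (Fin.castLE hKN k) k * C (Fin.castLE hKN k) k := by
          rw [Matrix.trace]; simp [Matrix.diag, hdiag C]
      _ ≤ ∑ k : Fin K, Λ (Fin.castLE hKN k) k := by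
          apply Finset.sum_le_sum
          intro k _
          calc Λ (Fin.castLE hKN k) k * C (Fin.castLE hKN k) k
              ≤ Λ (Fin.castLE hKN k) k * 1 :=
                mul_le_mul_of_nonneg_left (hCle _ _) (hΛnonneg _ _)
            _ = _ := mul_one _
  · rw [htr]
    have hCid : Uᵀ * (U * idZero N K * Vᵀ) * V = idZero N K := by
      calc Uᵀ * (U * idZero N K * Vᵀ) * V
          = (Uᵀ * U) * idZero N K * (Vᵀ * V) := by
            simp only [Matrix.mul_assoc]
        _ = idZero N K := by rw [hU, hV, Matrix.one_mul, Matrix.mul_one]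
    rw [hCid, Matrix.trace]
    have : ∀ k : Fin K, Matrix.diag (Λᵀ * idZero N K) k = Λ (Fin.castLE hKN k) k := by
      intro k
      rw [Matrix.diag_apply, hdiag]
      have : idZero N K (Fin.castLE hKN k) k = 1 := by
        simp [idZero]
      rw [this, mul_one]
    exact Finset.sum_congr rfl fun k _ => this k
end

section
/- Let A ∈ ℝ^{M×N}, B ∈ ℝ^{N×R}, let C ∈ ℝ^{R×R} be symmetric positive semidefinite, and let D ∈ ℝ^{M×M} be symmetric positive definite. Then the matrix H = I_R ⊗ D + (I_R ⊗ A) · diag(vec(B)) · (Cᵀ ⊗ I_N) · diag(vec(B)) · (I_R ⊗ Aᵀ) ∈ ℝ^{MR×MR} is symmetric positive definite; in particular H is invertible. -/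
open Matrix
open scoped Matrix Kronecker

lemma kron_posSemidef {m n : Type*} [Fintype m] [Fintype n] [DecidableEq m] [DecidableEq n]
    {P : Matrix m m ℝ} {Q : Matrix n n ℝ} (hP : P.PosSemidef) (hQ : Q.PosSemidef) :
    (P ⊗ₖ Q).PosSemidef := by
  exact hP.kronecker hQ

lemma one_kron_posDef {m n : Type*} [Fintype m] [Fintype n] [DecidableEq m] [DecidableEq n]
    {D : Matrix n n ℝ} (hD : D.PosDef) :
    ((1 : Matrix m m ℝ) ⊗ₖ D).PosDef := by
  constructor
  · show _ᴴ = _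
    rw [conjTranspose_eq_transpose_of_trivial, ← Matrix.kroneckerMap_transpose,
      Matrix.transpose_one]
    rw [← conjTranspose_eq_transpose_of_trivial, hD.isHermitian]
  · exact (Matrix.PosDef.one.kronecker hD).2

/-- If `C` is symmetric positive semidefinite and `D` is symmetric positive
definite, then `H = I ⊗ D + (I ⊗ A) diag(_root_.vec B) (Cᵀ ⊗ I) diag(_root_.vec B) (I ⊗ Aᵀ)`
is symmetric positive definite; in particular `H` is invertible. -/
theorem stmt9 {M N R : ℕ}
    (A : Matrix (Fin M) (Fin N) ℝ) (B : Matrix (Fin N) (Fin R) ℝ)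
    (C : Matrix (Fin R) (Fin R) ℝ) (D : Matrix (Fin M) (Fin M) ℝ)
    (hC : C.PosSemidef) (hD : D.PosDef) :
    ((1 : Matrix (Fin R) (Fin R) ℝ) ⊗ₖ D +
        ((1 : Matrix (Fin R) (Fin R) ℝ) ⊗ₖ A) * Matrix.diagonal (_root_.vec B) *
          (Cᵀ ⊗ₖ (1 : Matrix (Fin N) (Fin N) ℝ)) * Matrix.diagonal (_root_.vec B) *
          ((1 : Matrix (Fin R) (Fin R) ℝ) ⊗ₖ Aᵀ)).PosDef ∧
      IsUnit ((1 : Matrix (Fin R) (Fin R) ℝ) ⊗ₖ D +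
        ((1 : Matrix (Fin R) (Fin R) ℝ) ⊗ₖ A) * Matrix.diagonal (_root_.vec B) *
          (Cᵀ ⊗ₖ (1 : Matrix (Fin N) (Fin N) ℝ)) * Matrix.diagonal (_root_.vec B) *
          ((1 : Matrix (Fin R) (Fin R) ℝ) ⊗ₖ Aᵀ)) := by
  have hCt : Cᵀ = C := by rw [← conjTranspose_eq_transpose_of_trivial, hC.isHermitian]
  have hK : (Cᵀ ⊗ₖ (1 : Matrix (Fin N) (Fin N) ℝ)).PosSemidef := by
    rw [hCt]; exact kron_posSemidef hC Matrix.PosSemidef.one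
  have hE : ((1 : Matrix (Fin R) (Fin R) ℝ) ⊗ₖ A) * Matrix.diagonal (_root_.vec B) *
          (Cᵀ ⊗ₖ (1 : Matrix (Fin N) (Fin N) ℝ)) * Matrix.diagonal (_root_.vec B) *
          ((1 : Matrix (Fin R) (Fin R) ℝ) ⊗ₖ Aᵀ) =
      (((1 : Matrix (Fin R) (Fin R) ℝ) ⊗ₖ A) * Matrix.diagonal (_root_.vec B)) *
        (Cᵀ ⊗ₖ (1 : Matrix (Fin N) (Fin N) ℝ)) *
        (((1 : Matrix (Fin R) (Fin R) ℝ) ⊗ₖ A) * Matrix.diagonal (_root_.vec B))ᴴ := by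
    rw [Matrix.conjTranspose_mul]
    simp only [conjTranspose_eq_transpose_of_trivial, Matrix.diagonal_transpose,
      ← Matrix.kroneckerMap_transpose, Matrix.transpose_one]
    simp only [Matrix.mul_assoc]
  have h1 : (((1 : Matrix (Fin R) (Fin R) ℝ) ⊗ₖ D) +
      ((1 : Matrix (Fin R) (Fin R) ℝ) ⊗ₖ A) * Matrix.diagonal (_root_.vec B) *
          (Cᵀ ⊗ₖ (1 : Matrix (Fin N) (Fin N) ℝ)) * Matrix.diagonal (_root_.vec B) *
          ((1 : Matrix (Fin R) (Fin R) ℝ) ⊗ₖ Aᵀ)).PosDef := by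
    rw [hE]
    exact (one_kron_posDef hD).add_posSemidef (hK.mul_mul_conjTranspose_same _)
  exact ⟨h1, h1.isUnit⟩
end

section
/- Let A ∈ ℝ^{M×N}, B ∈ ℝ^{N×R}, let C ∈ ℝ^{R×R} be symmetric positive semidefinite, let D ∈ ℝ^{M×M} be symmetric positive definite, and let E ∈ ℝ^{M×R}. Then the matrix equation A (B ∗ ((B ∗ (Aᵀ X)) C)) + D X = E has a unique solution X ∈ ℝ^{M×R}, characterized by vec(X) = H⁻¹ vec(E) with H = I_R ⊗ D + (I_R ⊗ A) · diag(vec(B)) · (Cᵀ ⊗ I_N) · diag(vec(B)) · (I_R ⊗ Aᵀ). -/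
set_option maxHeartbeats 1000000


open Matrix
open scoped Matrix Kronecker

lemma vec_injective {m r : Type*} : Function.Injective (_root_.vec (m := m) (r := r)) := by
  intro P Q h
  ext i j
  exact congrFun h (j, i)

lemma vec_key {M N R : ℕ}
    (A : Matrix (Fin M) (Fin N) ℝ) (B : Matrix (Fin N) (Fin R) ℝ)
    (C : Matrix (Fin R) (Fin R) ℝ) (D : Matrix (Fin M) (Fin M) ℝ)
    (X : Matrix (Fin M) (Fin R) ℝ) :
    _root_.vec (A * (B ⊙ ((B ⊙ (Aᵀ * X)) * C)) + D * X) =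
      ((1 : Matrix (Fin R) (Fin R) ℝ) ⊗ₖ D +
            ((1 : Matrix (Fin R) (Fin R) ℝ) ⊗ₖ A) * Matrix.diagonal (_root_.vec B) *
              (Cᵀ ⊗ₖ (1 : Matrix (Fin N) (Fin N) ℝ)) * Matrix.diagonal (_root_.vec B) *
              ((1 : Matrix (Fin R) (Fin R) ℝ) ⊗ₖ Aᵀ)) *ᵥ (_root_.vec X) := by
  funext p
  obtain ⟨r, m⟩ := p
  simp only [_root_.vec, Matrix.add_apply, Matrix.mul_apply, Matrix.hadamard_apply,
    Matrix.mulVec, dotProduct, Matrix.kroneckerMap_apply, Matrix.diagonal_apply,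
    Fintype.sum_prod_type, Matrix.one_apply, Matrix.transpose_apply,
    Prod.mk.injEq, ite_and, mul_ite, ite_mul, mul_zero, zero_mul, mul_one, one_mul,
    Finset.sum_ite_eq, Finset.sum_ite_eq', Finset.mem_univ, if_true,
    Finset.sum_mul, Finset.mul_sum, add_mul, Finset.sum_add_distrib]
  rw [add_comm]
  congr 1
  · rw [Finset.sum_comm]
    simp [Finset.sum_ite_eq]
  · rw [Finset.sum_comm]
    refine Finset.sum_congr rfl fun r' _ => ?_
    rw [Finset.sum_comm]
    refine Finset.sum_congr rfl fun m' _ => ?_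
    rw [Finset.sum_comm]
    simp only [Finset.sum_ite_eq', Finset.mem_univ, if_true]
    refine Finset.sum_congr rfl fun n _ => ?_
    ring

lemma kron_one_posDef {R M : ℕ} {D : Matrix (Fin M) (Fin M) ℝ} (hD : D.PosDef) :
    ((1 : Matrix (Fin R) (Fin R) ℝ) ⊗ₖ D).PosDef := by
  have hsym : ∀ i j, D i j = D j i := fun i j => by
    conv_lhs => rw [← hD.isHermitian]
    simp [Matrix.conjTranspose_apply]
  rw [Matrix.posDef_iff_dotProduct_mulVec]
  constructor
  · ext ⟨r, m⟩ ⟨r', m'⟩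
    simp only [Matrix.conjTranspose_apply, Matrix.kroneckerMap_apply, Matrix.one_apply,
      star_trivial]
    rcases eq_or_ne r r' with h | h
    · simp [h, hsym m' m]
    · simp [h, Ne.symm h]
  · intro x hx
    have hq : star x ⬝ᵥ (((1 : Matrix (Fin R) (Fin R) ℝ) ⊗ₖ D) *ᵥ x) =
        ∑ r, (fun m => x (r, m)) ⬝ᵥ (D *ᵥ fun m => x (r, m)) := by
      simp only [star_trivial, dotProduct, Matrix.mulVec, Matrix.kroneckerMap_apply,
        Matrix.one_apply, Fintype.sum_prod_type, ite_mul, mul_ite, mul_zero, zero_mul,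
        Finset.mul_sum]
      refine Finset.sum_congr rfl fun r _ => Finset.sum_congr rfl fun m _ => ?_
      rw [Finset.sum_comm]
      simp [Finset.sum_ite_eq, Finset.mul_sum]
    rw [hq]
    obtain ⟨⟨r₀, m₀⟩, hp⟩ := Function.ne_iff.mp hx
    have hne : (fun m => x (r₀, m)) ≠ 0 := fun h0 => hp (by simpa using congrFun h0 m₀)
    refine Finset.sum_pos' (fun r _ => by simpa using hD.posSemidef.dotProduct_mulVec_nonneg fun m => x (r, m))
      ⟨r₀, Finset.mem_univ _, by simpa using hD.dotProduct_mulVec_pos hne⟩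

lemma kron_one_posSemidef {R N : ℕ} {C : Matrix (Fin R) (Fin R) ℝ} (hC : C.PosSemidef) :
    (Cᵀ ⊗ₖ (1 : Matrix (Fin N) (Fin N) ℝ)).PosSemidef := by
  have hsym : ∀ i j, C i j = C j i := fun i j => by
    conv_lhs => rw [← hC.isHermitian]
    simp [Matrix.conjTranspose_apply]
  rw [Matrix.posSemidef_iff_dotProduct_mulVec]
  constructor
  · ext ⟨r, n⟩ ⟨r', n'⟩
    simp only [Matrix.conjTranspose_apply, Matrix.kroneckerMap_apply, Matrix.one_apply,
      Matrix.transpose_apply, star_trivial]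
    rcases eq_or_ne n n' with h | h
    · simp [h, hsym r' r]
    · simp [h, Ne.symm h]
  · intro x
    have hq : star x ⬝ᵥ ((Cᵀ ⊗ₖ (1 : Matrix (Fin N) (Fin N) ℝ)) *ᵥ x) =
        ∑ n, (fun r => x (r, n)) ⬝ᵥ (C *ᵥ fun r => x (r, n)) := by
      simp only [star_trivial, dotProduct, Matrix.mulVec, Matrix.kroneckerMap_apply,
        Matrix.one_apply, Matrix.transpose_apply, Fintype.sum_prod_type, ite_mul, mul_ite,
        mul_zero, zero_mul, Finset.mul_sum]
      rw [Finset.sum_comm]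
      refine Finset.sum_congr rfl fun n _ => ?_
      refine Finset.sum_congr rfl fun r _ => ?_
      simp only [Finset.sum_ite_eq, Finset.mem_univ, if_true]
      refine Finset.sum_congr rfl fun r' _ => ?_
      rw [hsym r' r]
      ring
    rw [hq]
    exact Finset.sum_nonneg fun n _ => by simpa using hC.dotProduct_mulVec_nonneg fun r => x (r, n)

/-- If `C` is symmetric positive semidefinite and `D` is symmetric positive
definite, then `A (B ∗ ((B ∗ (Aᵀ X)) C)) + D X = E` has a unique solution `X`,
characterized by `vec(X) = H⁻¹ vec(E)`. -/
theorem stmt10 {M N R : ℕ}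
    (A : Matrix (Fin M) (Fin N) ℝ) (B : Matrix (Fin N) (Fin R) ℝ)
    (C : Matrix (Fin R) (Fin R) ℝ) (D : Matrix (Fin M) (Fin M) ℝ)
    (E : Matrix (Fin M) (Fin R) ℝ)
    (hC : C.PosSemidef) (hD : D.PosDef) :
    (∃! X : Matrix (Fin M) (Fin R) ℝ,
        A * (B ⊙ ((B ⊙ (Aᵀ * X)) * C)) + D * X = E) ∧
    ∀ X : Matrix (Fin M) (Fin R) ℝ,
      A * (B ⊙ ((B ⊙ (Aᵀ * X)) * C)) + D * X = E ↔
        _root_.vec X = ((1 : Matrix (Fin R) (Fin R) ℝ) ⊗ₖ D +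
            ((1 : Matrix (Fin R) (Fin R) ℝ) ⊗ₖ A) * Matrix.diagonal (_root_.vec B) *
              (Cᵀ ⊗ₖ (1 : Matrix (Fin N) (Fin N) ℝ)) * Matrix.diagonal (_root_.vec B) *
              ((1 : Matrix (Fin R) (Fin R) ℝ) ⊗ₖ Aᵀ))⁻¹.mulVec (_root_.vec E) := by
  set H := (1 : Matrix (Fin R) (Fin R) ℝ) ⊗ₖ D +
      ((1 : Matrix (Fin R) (Fin R) ℝ) ⊗ₖ A) * Matrix.diagonal (_root_.vec B) *
        (Cᵀ ⊗ₖ (1 : Matrix (Fin N) (Fin N) ℝ)) * Matrix.diagonal (_root_.vec B) *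
        ((1 : Matrix (Fin R) (Fin R) ℝ) ⊗ₖ Aᵀ) with hH_def
  have hterm : (((1 : Matrix (Fin R) (Fin R) ℝ) ⊗ₖ A) * Matrix.diagonal (_root_.vec B) *
      (Cᵀ ⊗ₖ (1 : Matrix (Fin N) (Fin N) ℝ)) * Matrix.diagonal (_root_.vec B) *
      ((1 : Matrix (Fin R) (Fin R) ℝ) ⊗ₖ Aᵀ)).PosSemidef := by
    have h := (kron_one_posSemidef (N := N) hC).conjTranspose_mul_mul_same
      (Matrix.diagonal (_root_.vec B) * ((1 : Matrix (Fin R) (Fin R) ℝ) ⊗ₖ Aᵀ))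
    have heq : (Matrix.diagonal (_root_.vec B) * ((1 : Matrix (Fin R) (Fin R) ℝ) ⊗ₖ Aᵀ))ᴴ =
        ((1 : Matrix (Fin R) (Fin R) ℝ) ⊗ₖ A) * Matrix.diagonal (_root_.vec B) := by
      rw [Matrix.conjTranspose_mul, Matrix.diagonal_conjTranspose]
      have h1 : (((1 : Matrix (Fin R) (Fin R) ℝ) ⊗ₖ Aᵀ))ᴴ =
          ((1 : Matrix (Fin R) (Fin R) ℝ) ⊗ₖ A) := by
        ext ⟨r, m⟩ ⟨r', n⟩
        simp only [Matrix.conjTranspose_apply, Matrix.kroneckerMap_apply, Matrix.one_apply,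
          Matrix.transpose_apply, star_trivial]
        exact congrArg (· * A m n) (if_congr eq_comm rfl rfl)
      rw [h1]
      simp
    rw [heq] at h
    rwa [← Matrix.mul_assoc] at h
  have hH : H.PosDef := (kron_one_posDef (R := R) hD).add_posSemidef hterm
  haveI : Invertible H := hH.isUnit.invertible
  have key : ∀ X : Matrix (Fin M) (Fin R) ℝ,
      A * (B ⊙ ((B ⊙ (Aᵀ * X)) * C)) + D * X = E ↔ _root_.vec X = H⁻¹ *ᵥ _root_.vec E := by
    intro X
    constructor
    · intro h
      exact (Matrix.inv_mulVec_eq_vec (by rw [← h, vec_key, hH_def])).symm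
    · intro h
      refine vec_injective ?_
      rw [vec_key, ← hH_def, h, Matrix.mulVec_mulVec, Matrix.mul_inv_of_invertible,
        Matrix.one_mulVec]
  refine ⟨?_, key⟩
  refine ⟨fun m r => (H⁻¹ *ᵥ _root_.vec E) (r, m), ?_, fun Y hY => ?_⟩
  · exact (key _).mpr rfl
  · exact vec_injective ((key Y).mp hY)
end

section
/- Let A ∈ ℝ^{M×N}, B ∈ ℝ^{N×R}, W ∈ ℝ^{K×R}, F ∈ ℝ^{N×K}, let P ∈ ℝ^{M×M} be symmetric, and let γ ≥ 0. Define J(X) = ‖(B ∗ (Aᵀ X)) Wᵀ − F‖²_F + γ tr(Xᵀ P X). Then the gradient of J at X is ∇J(X) = 2 [ A (B ∗ ((B ∗ (Aᵀ X)) Wᵀ W)) − A (B ∗ (F W)) + γ P X ]; in particular, X is a critical point of J if and only if A (B ∗ ((B ∗ (Aᵀ X)) Wᵀ W)) − A (B ∗ (F W)) + γ P X = 0. -/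
open Matrix
open scoped Matrix

/-- Squared Frobenius norm of a matrix. -/
def frobSq {m n : Type*} [Fintype m] [Fintype n] (P : Matrix m n ℝ) : ℝ :=
  ∑ i, ∑ j, (P i j) ^ 2

/-- The objective `J(X) = ‖(B ∗ (Aᵀ X)) Wᵀ − F‖²_F + γ tr(Xᵀ P X)`. -/
def J {M N R K : ℕ}
    (A : Matrix (Fin M) (Fin N) ℝ) (B : Matrix (Fin N) (Fin R) ℝ)
    (W : Matrix (Fin K) (Fin R) ℝ) (F : Matrix (Fin N) (Fin K) ℝ)
    (P : Matrix (Fin M) (Fin M) ℝ) (γ : ℝ)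
    (X : Matrix (Fin M) (Fin R) ℝ) : ℝ :=
  frobSq ((B ⊙ (Aᵀ * X)) * Wᵀ - F) + γ * Matrix.trace (Xᵀ * P * X)

lemma aux_sum_eq {M N R K : ℕ}
    (A : Matrix (Fin M) (Fin N) ℝ) (B : Matrix (Fin N) (Fin R) ℝ)
    (W : Matrix (Fin K) (Fin R) ℝ)
    (i : Fin M) (j : Fin R) (C : Matrix (Fin N) (Fin K) ℝ) :
    ∑ p, ∑ q, C p q * (((B ⊙ (Aᵀ * Matrix.single i j (1:ℝ))) * Wᵀ) p q)
      = (A * (B ⊙ (C * W))) i j := by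
  simp [Matrix.mul_apply, Matrix.hadamard_apply, Matrix.single, Matrix.transpose_apply,
    Finset.mul_sum, Finset.sum_mul, mul_ite, ite_mul, ite_and]
  exact Finset.sum_congr rfl fun p _ => Finset.sum_congr rfl fun q _ => by ring

lemma aux_trace_eq {M N : ℕ} (P : Matrix (Fin M) (Fin M) ℝ) (X : Matrix (Fin M) (Fin N) ℝ)
    (i : Fin M) (j : Fin N) :
    Matrix.trace ((Matrix.single i j (1:ℝ))ᵀ * P * X) = (P * X) i j := by
  rw [Matrix.mul_assoc]
  simp [Matrix.trace, Matrix.diag, Matrix.mul_apply, Matrix.transpose_apply,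
    Matrix.single, ite_mul, ite_and]

lemma grad_aux {M N R K : ℕ}
    (A : Matrix (Fin M) (Fin N) ℝ) (B : Matrix (Fin N) (Fin R) ℝ)
    (W : Matrix (Fin K) (Fin R) ℝ) (F : Matrix (Fin N) (Fin K) ℝ)
    (P : Matrix (Fin M) (Fin M) ℝ) (hP : Pᵀ = P)
    (γ : ℝ) (X : Matrix (Fin M) (Fin R) ℝ) (i : Fin M) (j : Fin R) :
    HasDerivAt (fun t : ℝ => J A B W F P γ (X + t • Matrix.single i j (1 : ℝ)))
      ((2 : ℝ) *
        ((A * (B ⊙ ((B ⊙ (Aᵀ * X)) * (Wᵀ * W))) - A * (B ⊙ (F * W)) + γ • (P * X)) i j))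
      0 := by
  set E : Matrix (Fin M) (Fin R) ℝ := Matrix.single i j (1:ℝ) with hE
  set C : Matrix (Fin N) (Fin K) ℝ := (B ⊙ (Aᵀ * X)) * Wᵀ - F with hC
  set D : Matrix (Fin N) (Fin K) ℝ := (B ⊙ (Aᵀ * E)) * Wᵀ with hD
  have hEq : ∀ t : ℝ, J A B W F P γ (X + t • E)
      = (∑ p, ∑ q, (C p q + t * D p q)^2)
        + γ * (Matrix.trace (Xᵀ * P * X)
            + t * (Matrix.trace (Eᵀ * P * X) + Matrix.trace (Xᵀ * P * E))
            + t^2 * Matrix.trace (Eᵀ * P * E)) := by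
    intro t
    have h1 : (B ⊙ (Aᵀ * (X + t • E))) * Wᵀ - F = C + t • D := by
      rw [Matrix.mul_add, Matrix.mul_smul, Matrix.hadamard_add, Matrix.hadamard_smul,
        Matrix.add_mul, Matrix.smul_mul, hC, hD]
      abel
    have h2 : frobSq (C + t • D) = ∑ p, ∑ q, (C p q + t * D p q)^2 := by
      simp [frobSq, Matrix.add_apply, Matrix.smul_apply, smul_eq_mul]
    have h3 : Matrix.trace ((X + t • E)ᵀ * P * (X + t • E))
        = Matrix.trace (Xᵀ * P * X)
          + t * (Matrix.trace (Eᵀ * P * X) + Matrix.trace (Xᵀ * P * E))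
          + t^2 * Matrix.trace (Eᵀ * P * E) := by
      simp only [Matrix.transpose_add, Matrix.transpose_smul, Matrix.add_mul, Matrix.smul_mul,
        Matrix.mul_add, Matrix.mul_smul, Matrix.trace_add, Matrix.trace_smul, smul_eq_mul,
        smul_smul]
      ring
    show frobSq ((B ⊙ (Aᵀ * (X + t • E))) * Wᵀ - F) + γ * Matrix.trace ((X + t • E)ᵀ * P * (X + t • E)) = _
    rw [h1, h2, h3]
  have hsum : HasDerivAt (fun t : ℝ => ∑ p, ∑ q, (C p q + t * D p q)^2)
      (∑ p, ∑ q, 2 * C p q * D p q) 0 := by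
    refine HasDerivAt.fun_sum fun p _ => HasDerivAt.fun_sum fun q _ => ?_
    have h := (((hasDerivAt_id (0:ℝ)).mul_const (D p q)).const_add (C p q)).fun_pow 2
    simpa using h
  have hpoly : HasDerivAt (fun t : ℝ => γ * (Matrix.trace (Xᵀ * P * X)
      + t * (Matrix.trace (Eᵀ * P * X) + Matrix.trace (Xᵀ * P * E))
      + t^2 * Matrix.trace (Eᵀ * P * E)))
      (γ * (Matrix.trace (Eᵀ * P * X) + Matrix.trace (Xᵀ * P * E))) 0 := by
    have h := (((hasDerivAt_const (0:ℝ) (Matrix.trace (Xᵀ * P * X))).add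
      ((hasDerivAt_id (0:ℝ)).mul_const
        (Matrix.trace (Eᵀ * P * X) + Matrix.trace (Xᵀ * P * E)))).add
      ((hasDerivAt_pow 2 (0:ℝ)).mul_const (Matrix.trace (Eᵀ * P * E)))).const_mul γ
    simpa using h
  have htot := hsum.add hpoly
  have hXPE : Matrix.trace (Xᵀ * P * E) = Matrix.trace (Eᵀ * P * X) := by
    rw [← Matrix.trace_transpose (Xᵀ * P * E)]
    simp [Matrix.transpose_mul, hP, Matrix.mul_assoc]
  have hval : (∑ p, ∑ q, 2 * C p q * D p q)
      + γ * (Matrix.trace (Eᵀ * P * X) + Matrix.trace (Xᵀ * P * E))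
      = (2 : ℝ) *
        ((A * (B ⊙ ((B ⊙ (Aᵀ * X)) * (Wᵀ * W))) - A * (B ⊙ (F * W)) + γ • (P * X)) i j) := by
    have hs : (∑ p, ∑ q, 2 * C p q * D p q) = 2 * ∑ p, ∑ q, C p q * D p q := by
      rw [Finset.mul_sum]
      refine Finset.sum_congr rfl fun p _ => ?_
      rw [Finset.mul_sum]
      exact Finset.sum_congr rfl fun q _ => by ring
    have hkey : ∑ p, ∑ q, C p q * D p q = (A * (B ⊙ (C * W))) i j :=
      aux_sum_eq A B W i j C
    have hCW : B ⊙ (C * W) = B ⊙ ((B ⊙ (Aᵀ * X)) * (Wᵀ * W)) - B ⊙ (F * W) := by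
      rw [hC, Matrix.sub_mul, Matrix.mul_assoc]
      ext p q
      simp [Matrix.hadamard_apply, Matrix.sub_apply, mul_sub]
    rw [hs, hkey, hCW, Matrix.mul_sub, hXPE, aux_trace_eq]
    simp [Matrix.sub_apply, Matrix.add_apply, Matrix.smul_apply, smul_eq_mul]
    ring
  have hfinal := htot.congr_of_eventuallyEq (Filter.Eventually.of_forall fun t => hEq t)
  exact hval ▸ hfinal

/-- The gradient of `J` at `X` (entrywise, as the matrix of partial derivatives
with respect to the entries of `X`) is
`∇J(X) = 2 [A (B ∗ ((B ∗ (Aᵀ X)) Wᵀ W)) − A (B ∗ (F W)) + γ P X]`;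
in particular `X` is a critical point of `J` iff
`A (B ∗ ((B ∗ (Aᵀ X)) Wᵀ W)) − A (B ∗ (F W)) + γ P X = 0`. -/
theorem stmt12 {M N R K : ℕ}
    (A : Matrix (Fin M) (Fin N) ℝ) (B : Matrix (Fin N) (Fin R) ℝ)
    (W : Matrix (Fin K) (Fin R) ℝ) (F : Matrix (Fin N) (Fin K) ℝ)
    (P : Matrix (Fin M) (Fin M) ℝ) (hP : Pᵀ = P)
    (γ : ℝ) (hγ : 0 ≤ γ) (X : Matrix (Fin M) (Fin R) ℝ) :
    (∀ (i : Fin M) (j : Fin R),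
        HasDerivAt (fun t : ℝ => J A B W F P γ (X + t • Matrix.single i j (1 : ℝ)))
          ((2 : ℝ) *
            ((A * (B ⊙ ((B ⊙ (Aᵀ * X)) * (Wᵀ * W))) - A * (B ⊙ (F * W)) + γ • (P * X)) i j))
          0) ∧
    ((∀ (i : Fin M) (j : Fin R),
        HasDerivAt (fun t : ℝ => J A B W F P γ (X + t • Matrix.single i j (1 : ℝ)))
          0 0) ↔
      A * (B ⊙ ((B ⊙ (Aᵀ * X)) * (Wᵀ * W))) - A * (B ⊙ (F * W)) + γ • (P * X) = 0) := by
  refine ⟨fun i j => grad_aux A B W F P hP γ X i j, ?_, ?_⟩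
  · intro h
    ext i j
    have h1 := (grad_aux A B W F P hP γ X i j).unique (h i j)
    have h2 : (A * (B ⊙ ((B ⊙ (Aᵀ * X)) * (Wᵀ * W))) - A * (B ⊙ (F * W)) + γ • (P * X)) i j
        = 0 := by linarith
    simpa using h2
  · intro h i j
    have hg := grad_aux A B W F P hP γ X i j
    rw [h] at hg
    simpa using hg
end

section
/- Let A, B ∈ ℝ^{I×J} and suppose every row b^i of B is nonzero. Let P ∈ ℝ^{I×I} be the diagonal matrix with p_{ii} = 1/(2‖b^i‖₂). If tr(Aᵀ P A) ≤ tr(Bᵀ P B), then ‖A‖_{2,1} ≤ ‖B‖_{2,1}, where ‖X‖_{2,1} = Σ_{i=1}^{I} ‖x^i‖₂ is the sum of the Euclidean norms of the rows of X. -/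
open Matrix
open scoped Matrix

/-- Euclidean norm of a vector in `ℝ^J`. -/
noncomputable def rowEnorm {J : ℕ} (v : Fin J → ℝ) : ℝ := Real.sqrt (∑ j, v j ^ 2)

/-- The `ℓ_{2,1}` norm of a matrix: the sum of the Euclidean norms of its rows. -/
noncomputable def l21norm {I J : ℕ} (X : Matrix (Fin I) (Fin J) ℝ) : ℝ :=
  ∑ i, rowEnorm (X i)

lemma rowEnorm_nonneg {J : ℕ} (v : Fin J → ℝ) : 0 ≤ rowEnorm v := Real.sqrt_nonneg _

lemma rowEnorm_sq {J : ℕ} (v : Fin J → ℝ) : rowEnorm v ^ 2 = ∑ j, v j ^ 2 :=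
  Real.sq_sqrt (Finset.sum_nonneg fun j _ => sq_nonneg _)

lemma trace_diag {I J : ℕ} (X : Matrix (Fin I) (Fin J) ℝ) (d : Fin I → ℝ) :
    Matrix.trace (Xᵀ * Matrix.diagonal d * X) = ∑ i, d i * rowEnorm (X i) ^ 2 := by
  simp only [Matrix.trace, Matrix.diag, Matrix.mul_apply, Matrix.transpose_apply, rowEnorm_sq,
    Matrix.diagonal_apply, mul_ite, mul_zero, ite_mul, zero_mul, Finset.sum_ite_eq, Finset.sum_ite_eq',
    Finset.mem_univ, if_true, Finset.sum_mul]
  rw [Finset.sum_comm]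
  congr 1
  ext i
  rw [Finset.mul_sum]
  congr 1
  ext j
  ring

/-- For `A, B ∈ ℝ^{I×J}` with all rows of `B` nonzero and
`P = diag(1/(2‖b^i‖₂))`: if `tr(Aᵀ P A) ≤ tr(Bᵀ P B)` then
`‖A‖_{2,1} ≤ ‖B‖_{2,1}`. -/
theorem stmt15 {I J : ℕ} (A B : Matrix (Fin I) (Fin J) ℝ)
    (hB : ∀ i : Fin I, B i ≠ 0)
    (h : Matrix.trace (Aᵀ * Matrix.diagonal (fun i => 1 / (2 * rowEnorm (B i))) * A) ≤
         Matrix.trace (Bᵀ * Matrix.diagonal (fun i => 1 / (2 * rowEnorm (B i))) * B)) :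
    l21norm A ≤ l21norm B := by
  have hbpos : ∀ i, 0 < rowEnorm (B i) := by
    intro i
    rcases (rowEnorm_nonneg (B i)).lt_or_eq with hlt | heq
    · exact hlt
    · exfalso
      apply hB i
      have h2 : (∑ j, B i j ^ 2) = 0 := by
        rw [← rowEnorm_sq, ← heq]; norm_num
      funext j
      have := (Finset.sum_eq_zero_iff_of_nonneg (fun j _ => sq_nonneg (B i j))).mp h2 j
        (Finset.mem_univ j)
      exact pow_eq_zero_iff (by norm_num) |>.mp this
  rw [trace_diag, trace_diag] at h
  have key : ∀ i : Fin I, rowEnorm (A i) ≤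
      1 / (2 * rowEnorm (B i)) * rowEnorm (A i) ^ 2 + rowEnorm (B i) / 2 := by
    intro i
    have hb := hbpos i
    have ha := rowEnorm_nonneg (A i)
    rw [div_mul_eq_mul_div, ← sub_nonneg]
    have : 1 * rowEnorm (A i) ^ 2 / (2 * rowEnorm (B i)) + rowEnorm (B i) / 2 - rowEnorm (A i)
        = (rowEnorm (A i) - rowEnorm (B i)) ^ 2 / (2 * rowEnorm (B i)) := by
      field_simp
      ring
    rw [this]
    positivity
  have hBeq : ∀ i : Fin I, 1 / (2 * rowEnorm (B i)) * rowEnorm (B i) ^ 2 = rowEnorm (B i) / 2 := by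
    intro i
    have hb := (hbpos i).ne'
    field_simp
  calc l21norm A ≤ ∑ i, (1 / (2 * rowEnorm (B i)) * rowEnorm (A i) ^ 2 + rowEnorm (B i) / 2) :=
        Finset.sum_le_sum fun i _ => key i
    _ = (∑ i, 1 / (2 * rowEnorm (B i)) * rowEnorm (A i) ^ 2) + ∑ i, rowEnorm (B i) / 2 := by
        rw [Finset.sum_add_distrib]
    _ ≤ (∑ i, 1 / (2 * rowEnorm (B i)) * rowEnorm (B i) ^ 2) + ∑ i, rowEnorm (B i) / 2 := by
        exact add_le_add_left h _
    _ = l21norm B := by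
        simp only [hBeq, l21norm]
        rw [← Finset.sum_add_distrib]
        congr 1; ext i; ring
end
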